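/- For any b > 0 and all x ∈ ℝ, the function f(x;b) = exp(−(b/√(2π))·e^{−x²/2}) · [e^{b²/2} Q(x−b) + 1 − Q(x)] satisfies f(x;b) ≤ e^{b²/2}, where Q is the standard Gaussian tail function. -/

import Mathlib

open MeasureTheory Set

noncomputable def gaussQ (x : ℝ) : ℝ :=
  ∫ t in Set.Ioi x, (1 / Real.sqrt (2 * Real.pi)) * Real.exp (-(t ^ 2) / 2)

namespace Stmt5Aux

noncomputable def g (t : ℝ) : ℝ := (1 / Real.sqrt (2 * Real.pi)) * Real.exp (-(t ^ 2) / 2)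

lemma g_nonneg (t : ℝ) : 0 ≤ g t := by unfold g; positivity

lemma gauss_integrable : Integrable g := by
  have h : Integrable (fun t : ℝ => Real.exp (-(1/2 : ℝ) * t ^ 2)) :=
    integrable_exp_neg_mul_sq (by norm_num)
  have := h.const_mul (1 / Real.sqrt (2 * Real.pi))
  convert this using 2 with t
  unfold g; ring_nf

lemma gauss_total : (∫ t : ℝ, g t) = 1 := by
  unfold g
  rw [MeasureTheory.integral_const_mul]
  have : (∫ t : ℝ, Real.exp (-(t ^ 2) / 2)) = ∫ t : ℝ, Real.exp (-(1/2 : ℝ) * t ^ 2) := by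
    congr 1; funext t; ring_nf
  rw [this, integral_gaussian]
  rw [one_div, inv_mul_eq_div, div_eq_one_iff_eq (by positivity)]
  rw [show Real.pi / (1/2 : ℝ) = 2 * Real.pi by ring]

lemma gaussQ_eq (x : ℝ) : gaussQ x = ∫ t in Set.Ioi x, g t := rfl

lemma gaussQ_nonneg (x : ℝ) : 0 ≤ gaussQ x := by
  apply MeasureTheory.setIntegral_nonneg measurableSet_Ioi
  intro t _
  positivity

lemma gaussQ_anti {x y : ℝ} (h : x ≤ y) : gaussQ y ≤ gaussQ x := by
  apply MeasureTheory.setIntegral_mono_set gauss_integrable.integrableOn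
    (MeasureTheory.ae_of_all _ fun t => g_nonneg t)
  exact MeasureTheory.ae_of_all _ (Set.Ioi_subset_Ioi h)

lemma gaussQ_zero : gaussQ 0 = 1/2 := by
  have hsymm : (∫ t in Set.Ioi (0:ℝ), g (-t)) = ∫ t in Set.Iic (0:ℝ), g t := by
    simpa using integral_comp_neg_Ioi (0:ℝ) g
  have heven : (∫ t in Set.Ioi (0:ℝ), g (-t)) = ∫ t in Set.Ioi (0:ℝ), g t := by
    congr 1; funext t; unfold g; ring_nf
  have hsplit : (∫ t in Set.Iic (0:ℝ), g t) + (∫ t in Set.Ioi (0:ℝ), g t) = ∫ t : ℝ, g t :=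
    intervalIntegral.integral_Iic_add_Ioi gauss_integrable.integrableOn gauss_integrable.integrableOn
  rw [gauss_total, ← hsymm, heven] at hsplit
  rw [gaussQ_eq]
  linarith

lemma gaussQ_diff {a c : ℝ} (h : a ≤ c) :
    gaussQ a - gaussQ c = ∫ t in Set.Ioc a c, g t := by
  have hu : Set.Ioc a c ∪ Set.Ioi c = Set.Ioi a := Set.Ioc_union_Ioi_eq_Ioi h
  rw [gaussQ_eq, gaussQ_eq, ← hu,
    MeasureTheory.setIntegral_union (Set.Ioc_disjoint_Ioi le_rfl) measurableSet_Ioi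
      gauss_integrable.integrableOn gauss_integrable.integrableOn]
  ring

lemma diff_le {a c C : ℝ} (h : a ≤ c) (hC : ∀ t ∈ Set.Ioc a c, g t ≤ C) :
    gaussQ a - gaussQ c ≤ (c - a) * C := by
  rw [gaussQ_diff h]
  have h1 : (∫ t in Set.Ioc a c, g t) ≤ ∫ _t in Set.Ioc a c, C := by
    apply MeasureTheory.setIntegral_mono_on gauss_integrable.integrableOn
      (MeasureTheory.integrableOn_const
        (by rw [Real.volume_Ioc]; exact ENNReal.ofReal_lt_top.ne))
      measurableSet_Ioc hC
  have h2 : (∫ _t in Set.Ioc a c, C) = (c - a) * C := by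
    rw [MeasureTheory.setIntegral_const, Real.volume_real_Ioc_of_le h]
    simp [smul_eq_mul]
  linarith

lemma texp_le {t : ℝ} (ht : 0 ≤ t) : t * Real.exp (-(t ^ 2) / 2) ≤ Real.exp (-(1:ℝ)/2) := by
  have h1 : t ≤ Real.exp ((t ^ 2 - 1) / 2) := by
    have := Real.add_one_le_exp ((t ^ 2 - 1) / 2)
    nlinarith [sq_nonneg (t - 1)]
  have h2 : t * Real.exp (-(t ^ 2) / 2) ≤ Real.exp ((t ^ 2 - 1) / 2) * Real.exp (-(t ^ 2) / 2) :=
    mul_le_mul_of_nonneg_right h1 (Real.exp_pos _).le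
  rw [← Real.exp_add] at h2
  calc t * Real.exp (-(t ^ 2) / 2) ≤ _ := h2
    _ = Real.exp (-(1:ℝ)/2) := by ring_nf

lemma exp_lip {u v : ℝ} (hu : 0 ≤ u) (huv : u ≤ v) :
    Real.exp (-(u ^ 2) / 2) - Real.exp (-(v ^ 2) / 2) ≤ (v - u) * Real.exp (-(1:ℝ)/2) := by
  have hderiv : ∀ t ∈ Set.uIcc u v, HasDerivAt (fun s : ℝ => -Real.exp (-(s ^ 2) / 2))
      (t * Real.exp (-(t ^ 2) / 2)) t := by
    intro t _
    have h1 : HasDerivAt (fun s : ℝ => -(s ^ 2) / 2) (-t) t := by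
      have h := ((hasDerivAt_pow 2 t).neg.div_const 2)
      refine h.congr_deriv ?_
      push_cast; ring
    have h2 := (h1.exp).neg
    refine h2.congr_deriv ?_
    ring
  have hcont : Continuous (fun t : ℝ => t * Real.exp (-(t ^ 2) / 2)) := by
    exact continuous_id.mul (Real.continuous_exp.comp (by continuity))
  have hint : IntervalIntegrable (fun t : ℝ => t * Real.exp (-(t ^ 2) / 2)) volume u v :=
    hcont.intervalIntegrable u v
  have heq := intervalIntegral.integral_eq_sub_of_hasDerivAt hderiv hint
  have hbound : (∫ t in u..v, t * Real.exp (-(t ^ 2) / 2))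
      ≤ ∫ _t in u..v, Real.exp (-(1:ℝ)/2) := by
    apply intervalIntegral.integral_mono_on huv hint intervalIntegrable_const
    intro t ht
    exact texp_le (le_trans hu ht.1)
  rw [intervalIntegral.integral_const, smul_eq_mul] at hbound
  rw [heq] at hbound
  linarith

lemma exp_half_le : Real.exp (-(1:ℝ)/2) ≤ Real.sqrt (2 * Real.pi) / 4 := by
  have h1 : Real.exp (-(1:ℝ)/2) ^ 2 = Real.exp (-1) := by
    rw [sq, ← Real.exp_add]; norm_num
  have h2 : Real.sqrt (2 * Real.pi) ^ 2 = 2 * Real.pi := Real.sq_sqrt (by positivity)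
  have h3 : Real.exp (-1 : ℝ) * Real.exp 1 = 1 := by rw [← Real.exp_add]; norm_num
  have he : (2.7182818283 : ℝ) < Real.exp 1 := Real.exp_one_gt_d9
  have hpi : (3.141592 : ℝ) < Real.pi := Real.pi_gt_d6
  have hs : 0 < Real.sqrt (2 * Real.pi) := Real.sqrt_pos.mpr (by positivity)
  have ht : 0 < Real.exp (-(1:ℝ)/2) := Real.exp_pos _
  nlinarith [sq_nonneg (Real.sqrt (2 * Real.pi) - 4 * Real.exp (-(1:ℝ)/2)),
    Real.exp_pos (-1 : ℝ), Real.exp_pos (1 : ℝ)]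

lemma key (b x : ℝ) (hb : 0 < b) :
    gaussQ (x - b) - gaussQ x
      ≤ Real.exp (b ^ 2 / 2) * b * g x
        + (Real.exp (b ^ 2 / 2) - 1) * (1 - gaussQ (x - b)) := by
  set A := Real.exp (b ^ 2 / 2) with hA
  have hA1 : 1 ≤ A := Real.one_le_exp (by positivity)
  have hQ1 : gaussQ (x - b) ≤ 1 := by
    have h := MeasureTheory.setIntegral_le_integral (s := Set.Ioi (x - b)) gauss_integrable
      (MeasureTheory.ae_of_all _ fun t => g_nonneg t)
    rw [gauss_total] at h
    exact h
  rcases le_or_gt x 0 with hx | hx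
  · -- case x ≤ 0 : g increasing on interval
    have hd : gaussQ (x - b) - gaussQ x ≤ (x - (x - b)) * g x := by
      apply diff_le (by linarith)
      intro t ht
      unfold g
      have : t ^ 2 ≥ x ^ 2 := by nlinarith [ht.1, ht.2]
      have := Real.exp_le_exp.mpr (show -(t ^ 2) / 2 ≤ -(x ^ 2) / 2 by linarith)
      have hs : (0:ℝ) < 1 / Real.sqrt (2 * Real.pi) := by positivity
      nlinarith
    rw [show x - (x - b) = b by ring] at hd
    have hgx := g_nonneg x
    nlinarith [mul_nonneg (mul_nonneg (sub_nonneg.mpr hA1) hb.le) hgx,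
      mul_nonneg (sub_nonneg.mpr hA1) (sub_nonneg.mpr hQ1)]
  rcases le_or_gt x b with hxb | hxb
  · -- case 0 < x ≤ b
    have hd : gaussQ (x - b) - gaussQ x ≤ (x - (x - b)) * (1 / Real.sqrt (2 * Real.pi)) := by
      apply diff_le (by linarith)
      intro t ht
      unfold g
      have h1 : Real.exp (-(t ^ 2) / 2) ≤ 1 := Real.exp_le_one_iff.mpr (by nlinarith [sq_nonneg t])
      have hs : (0:ℝ) < 1 / Real.sqrt (2 * Real.pi) := by positivity
      nlinarith
    have hAg : 1 / Real.sqrt (2 * Real.pi) ≤ A * g x := by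
      unfold g
      have h1 : (1:ℝ) ≤ A * Real.exp (-(x ^ 2) / 2) := by
        rw [hA, ← Real.exp_add]
        apply Real.one_le_exp
        nlinarith
      have hs : (0:ℝ) < 1 / Real.sqrt (2 * Real.pi) := by positivity
      calc 1 / Real.sqrt (2 * Real.pi) = (1 / Real.sqrt (2 * Real.pi)) * 1 := by ring
        _ ≤ (1 / Real.sqrt (2 * Real.pi)) * (A * Real.exp (-(x ^ 2) / 2)) := by
            exact mul_le_mul_of_nonneg_left h1 hs.le
        _ = A * ((1 / Real.sqrt (2 * Real.pi)) * Real.exp (-(x ^ 2) / 2)) := by ring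
    rw [show x - (x - b) = b by ring] at hd
    have h6 : b * (1 / Real.sqrt (2 * Real.pi)) ≤ b * (A * g x) :=
      mul_le_mul_of_nonneg_left hAg hb.le
    nlinarith [mul_nonneg (sub_nonneg.mpr hA1) (sub_nonneg.mpr hQ1)]
  · -- case x > b
    have hxb0 : 0 ≤ x - b := by linarith
    have hd : gaussQ (x - b) - gaussQ x ≤ (x - (x - b)) * g (x - b) := by
      apply diff_le (by linarith)
      intro t ht
      unfold g
      have h2 : (x - b) ^ 2 ≤ t ^ 2 := by nlinarith [ht.1, ht.2]
      have := Real.exp_le_exp.mpr (show -(t ^ 2) / 2 ≤ -((x - b) ^ 2) / 2 by linarith)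
      have hs : (0:ℝ) < 1 / Real.sqrt (2 * Real.pi) := by positivity
      nlinarith
    -- Lipschitz : g (x - b) ≤ g x + b / 4
    have hlip : g (x - b) - g x ≤ b / 4 := by
      unfold g
      have h1 := exp_lip hxb0 (show x - b ≤ x by linarith)
      have hs : (0:ℝ) < Real.sqrt (2 * Real.pi) := Real.sqrt_pos.mpr (by positivity)
      have h2 : Real.exp (-(1:ℝ)/2) ≤ Real.sqrt (2 * Real.pi) / 4 := exp_half_le
      have h3 : (1 / Real.sqrt (2 * Real.pi)) *
          (Real.exp (-((x-b) ^ 2) / 2) - Real.exp (-(x ^ 2) / 2))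
          ≤ (1 / Real.sqrt (2 * Real.pi)) * (b * Real.exp (-(1:ℝ)/2)) := by
        apply mul_le_mul_of_nonneg_left _ (by positivity)
        calc Real.exp (-((x-b) ^ 2) / 2) - Real.exp (-(x ^ 2) / 2)
            ≤ (x - (x - b)) * Real.exp (-(1:ℝ)/2) := h1
          _ = b * Real.exp (-(1:ℝ)/2) := by ring
      have h4 : (1 / Real.sqrt (2 * Real.pi)) * (b * Real.exp (-(1:ℝ)/2)) ≤ b / 4 := by
        rw [div_mul_eq_mul_div, one_mul, div_le_iff₀ hs]
        calc b * Real.exp (-(1:ℝ)/2) ≤ b * (Real.sqrt (2 * Real.pi) / 4) :=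
              mul_le_mul_of_nonneg_left h2 hb.le
          _ = b / 4 * Real.sqrt (2 * Real.pi) := by ring
      calc (1 / Real.sqrt (2*Real.pi)) * Real.exp (-((x-b) ^ 2) / 2)
            - (1 / Real.sqrt (2*Real.pi)) * Real.exp (-(x ^ 2) / 2)
          = (1 / Real.sqrt (2*Real.pi)) *
            (Real.exp (-((x-b) ^ 2) / 2) - Real.exp (-(x ^ 2) / 2)) := by ring
        _ ≤ (1 / Real.sqrt (2 * Real.pi)) * (b * Real.exp (-(1:ℝ)/2)) := h3
        _ ≤ b / 4 := h4
    -- tail at x - b ≥ 0 is at most 1/2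
    have hhalf : gaussQ (x - b) ≤ 1/2 := by
      calc gaussQ (x - b) ≤ gaussQ 0 := gaussQ_anti hxb0
        _ = 1/2 := gaussQ_zero
    have hA2 : 1 + b ^ 2 / 2 ≤ A := by
      rw [hA]
      have := Real.add_one_le_exp (b ^ 2 / 2)
      linarith
    have hgx := g_nonneg x
    rw [show x - (x - b) = b by ring] at hd
    have h5 : b * (g (x - b) - g x) ≤ b * (b / 4) := mul_le_mul_of_nonneg_left hlip hb.le
    have h6 : (b ^ 2 / 2) * (1 / 2) ≤ (A - 1) * (1 - gaussQ (x - b)) :=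
      mul_le_mul (by linarith) (by linarith) (by norm_num) (by linarith)
    nlinarith [mul_nonneg (mul_nonneg (sub_nonneg.mpr hA1) hb.le) hgx]
end Stmt5Aux

open Stmt5Aux in
theorem stmt_5 (b : ℝ) (hb : 0 < b) (x : ℝ) :
    Real.exp (-(b / Real.sqrt (2 * Real.pi)) * Real.exp (-(x ^ 2) / 2)) *
        (Real.exp (b ^ 2 / 2) * gaussQ (x - b) + 1 - gaussQ x)
      ≤ Real.exp (b ^ 2 / 2) := by
  set A := Real.exp (b ^ 2 / 2) with hA
  have hEeq : Real.exp (-(b / Real.sqrt (2 * Real.pi)) * Real.exp (-(x ^ 2) / 2))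
      = Real.exp (-(b * g x)) := by
    congr 1
    unfold g
    ring
  have hk := key b x hb
  have hbr : A * gaussQ (x - b) + 1 - gaussQ x ≤ A * (1 + b * g x) := by nlinarith
  have hexp : 1 + b * g x ≤ Real.exp (b * g x) := by
    have := Real.add_one_le_exp (b * g x)
    linarith
  have hA0 : 0 < A := Real.exp_pos _
  have hbr2 : A * gaussQ (x - b) + 1 - gaussQ x ≤ A * Real.exp (b * g x) := by
    calc A * gaussQ (x - b) + 1 - gaussQ x ≤ A * (1 + b * g x) := hbr
      _ ≤ A * Real.exp (b * g x) := mul_le_mul_of_nonneg_left hexp hA0.le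
  rw [hEeq]
  calc Real.exp (-(b * g x)) * (A * gaussQ (x - b) + 1 - gaussQ x)
      ≤ Real.exp (-(b * g x)) * (A * Real.exp (b * g x)) :=
        mul_le_mul_of_nonneg_left hbr2 (Real.exp_pos _).le
    _ = A * (Real.exp (-(b * g x)) * Real.exp (b * g x)) := by ring
    _ = A := by rw [← Real.exp_add]; simp
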